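/- Let d ≥ 2, let a ≤ b and a' ≤ b' be reals, and let f, g : ℝ → ℝ^d be differentiable on [a,b] and on [a',b'] respectively, with f'(t)₀² − (f'(t)₁² + ⋯ + f'(t)_{d−1}²) = 1 for all t ∈ [a,b] and g'(t)₀² − (g'(t)₁² + ⋯ + g'(t)_{d−1}²) = 1 for all t ∈ [a',b']. If the image of [a,b] under f equals the image of [a',b'] under g, then b − a = b' − a'. -/

import Mathlib

open Set

private lemma comp_deriv {d : ℕ} {v : ℝ → Fin d → ℝ} {v' : Fin d → ℝ} {t : ℝ}
    (h : HasDerivAt v v' t) (i : Fin d) : HasDerivAt (fun s => v s i) (v' i) t := by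
  have := (ContinuousLinearMap.proj (R := ℝ) (φ := fun _ : Fin d => ℝ) i).hasFDerivAt.comp_hasDerivAt t h
  simpa [Function.comp_def] using this

private lemma sign_dichotomy {a b : ℝ} {f0 f0' : ℝ → ℝ}
    (hf : ∀ t ∈ Icc a b, HasDerivAt f0 (f0' t) t)
    (h1 : ∀ t ∈ Icc a b, 1 ≤ (f0' t) ^ 2) :
    (∀ t ∈ Icc a b, 1 ≤ f0' t) ∨ (∀ t ∈ Icc a b, f0' t ≤ -1) := by
  by_contra h
  push_neg at h
  obtain ⟨⟨t₁, ht₁, h₁⟩, ⟨t₂, ht₂, h₂⟩⟩ := h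
  have key : ∀ t ∈ Icc a b, 1 ≤ f0' t ∨ f0' t ≤ -1 := by
    intro t ht
    rcases le_or_gt 1 (f0' t) with h | h
    · exact Or.inl h
    rcases le_or_gt (f0' t) (-1) with h' | h'
    · exact Or.inr h'
    · exfalso; nlinarith [h1 t ht]
  have h₁' : f0' t₁ ≤ -1 := (key t₁ ht₁).resolve_left (by linarith)
  have h₂' : 1 ≤ f0' t₂ := (key t₂ ht₂).resolve_right (by linarith)
  rcases le_total t₁ t₂ with hle | hle
  · have hsub : Icc t₁ t₂ ⊆ Icc a b := Icc_subset_Icc ht₁.1 ht₂.2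
    obtain ⟨c, hc, hc0⟩ := exists_hasDerivWithinAt_eq_of_gt_of_lt hle
      (fun x hx => ((hf x (hsub hx)).hasDerivWithinAt))
      (show f0' t₁ < 0 by linarith) (show (0:ℝ) < f0' t₂ by linarith)
    nlinarith [h1 c (hsub (Ioo_subset_Icc_self hc))]
  · have hsub : Icc t₂ t₁ ⊆ Icc a b := Icc_subset_Icc ht₂.1 ht₁.2
    obtain ⟨c, hc, hc0⟩ := exists_hasDerivWithinAt_eq_of_lt_of_gt hle
      (fun x hx => ((hf x (hsub hx)).hasDerivWithinAt))
      (show (0:ℝ) < f0' t₂ by linarith) (show f0' t₁ < 0 by linarith)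
    nlinarith [h1 c (hsub (Ioo_subset_Icc_self hc))]

private lemma normalizeCurve (d : ℕ) [NeZero d] (a b : ℝ) (hab : a ≤ b)
    (f f' : ℝ → Fin d → ℝ)
    (hf : ∀ t ∈ Set.Icc a b, HasDerivAt f (f' t) t)
    (hwpf : ∀ t ∈ Set.Icc a b,
      (f' t 0) ^ 2 - ∑ i ∈ Finset.univ.erase (0 : Fin d), (f' t i) ^ 2 = 1) :
    ∃ F F' : ℝ → Fin d → ℝ,
      (∀ t ∈ Set.Icc a b, HasDerivAt F (F' t) t) ∧
      (∀ t ∈ Set.Icc a b,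
        (F' t 0) ^ 2 - ∑ i ∈ Finset.univ.erase (0 : Fin d), (F' t i) ^ 2 = 1) ∧
      (∀ t ∈ Set.Icc a b, 1 ≤ F' t 0) ∧
      F '' Set.Icc a b = f '' Set.Icc a b := by
  have hsq : ∀ t ∈ Icc a b, 1 ≤ (f' t 0) ^ 2 := by
    intro t ht
    have h1 := hwpf t ht
    have h2 : (0:ℝ) ≤ ∑ i ∈ Finset.univ.erase (0 : Fin d), (f' t i) ^ 2 :=
      Finset.sum_nonneg fun i _ => sq_nonneg _
    linarith
  have hf0 : ∀ t ∈ Icc a b, HasDerivAt (fun u => f u 0) (f' t 0) t :=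
    fun t ht => comp_deriv (hf t ht) 0
  rcases sign_dichotomy hf0 hsq with hpos | hneg
  · exact ⟨f, f', hf, hwpf, hpos, rfl⟩
  · have hmem : ∀ t ∈ Icc a b, a + b - t ∈ Icc a b := by
      intro t ht
      exact ⟨by linarith [ht.2], by linarith [ht.1]⟩
    refine ⟨fun t => f (a + b - t), fun t => -f' (a + b - t), ?_, ?_, ?_, ?_⟩
    · intro t ht
      have h1 : HasDerivAt (fun s : ℝ => a + b - s) (-1) t := by
        simpa using (hasDerivAt_id t).const_sub (a + b)
      have h2 := (hf (a + b - t) (hmem t ht)).scomp t h1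
      simpa [neg_smul, one_smul, Function.comp_def] using h2
    · intro t ht
      have := hwpf (a + b - t) (hmem t ht)
      simpa [Pi.neg_apply, neg_sq] using this
    · intro t ht
      have := hneg (a + b - t) (hmem t ht)
      simp only [Pi.neg_apply]
      linarith
    · have himg : (fun s : ℝ => a + b - s) '' Icc a b = Icc a b := by
        rw [show (fun s : ℝ => a + b - s) = (fun s : ℝ => a + b - s) from rfl]
        rw [Set.image_const_sub_Icc]
        congr 1 <;> ring
      calc (fun t => f (a + b - t)) '' Icc a b
          = f '' ((fun s : ℝ => a + b - s) '' Icc a b) := by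
            rw [← Set.image_comp]; rfl
        _ = f '' Icc a b := by rw [himg]

private lemma key_lemma (d : ℕ) [NeZero d]
    (a b a' b' : ℝ) (hab : a ≤ b) (hab' : a' ≤ b')
    (f f' g g' : ℝ → Fin d → ℝ)
    (hf : ∀ t ∈ Set.Icc a b, HasDerivAt f (f' t) t)
    (hg : ∀ t ∈ Set.Icc a' b', HasDerivAt g (g' t) t)
    (hwpf : ∀ t ∈ Set.Icc a b,
      (f' t 0) ^ 2 - ∑ i ∈ Finset.univ.erase (0 : Fin d), (f' t i) ^ 2 = 1)
    (hwpg : ∀ t ∈ Set.Icc a' b',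
      (g' t 0) ^ 2 - ∑ i ∈ Finset.univ.erase (0 : Fin d), (g' t i) ^ 2 = 1)
    (hfpos : ∀ t ∈ Set.Icc a b, 1 ≤ f' t 0)
    (hgpos : ∀ t ∈ Set.Icc a' b', 1 ≤ g' t 0)
    (him : f '' Set.Icc a b = g '' Set.Icc a' b') :
    b - a = b' - a' := by
  set f0 : ℝ → ℝ := fun t => f t 0 with hf0def
  set g0 : ℝ → ℝ := fun t => g t 0 with hg0def
  have hf0 : ∀ t ∈ Icc a b, HasDerivAt f0 (f' t 0) t := fun t ht => comp_deriv (hf t ht) 0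
  have hg0 : ∀ t ∈ Icc a' b', HasDerivAt g0 (g' t 0) t := fun t ht => comp_deriv (hg t ht) 0
  have hf0cont : ContinuousOn f0 (Icc a b) :=
    fun t ht => (hf0 t ht).continuousAt.continuousWithinAt
  have hg0cont : ContinuousOn g0 (Icc a' b') :=
    fun t ht => (hg0 t ht).continuousAt.continuousWithinAt
  have hf0mono : StrictMonoOn f0 (Icc a b) := by
    apply strictMonoOn_of_deriv_pos (convex_Icc a b) hf0cont
    intro x hx
    rw [interior_Icc] at hx
    rw [(hf0 x (Ioo_subset_Icc_self hx)).deriv]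
    linarith [hfpos x (Ioo_subset_Icc_self hx)]
  have hg0mono : StrictMonoOn g0 (Icc a' b') := by
    apply strictMonoOn_of_deriv_pos (convex_Icc a' b') hg0cont
    intro x hx
    rw [interior_Icc] at hx
    rw [(hg0 x (Ioo_subset_Icc_self hx)).deriv]
    linarith [hgpos x (Ioo_subset_Icc_self hx)]
  have hf0img : f0 '' Icc a b = Icc (f0 a) (f0 b) := by
    apply Subset.antisymm
    · rintro _ ⟨t, ht, rfl⟩
      exact ⟨hf0mono.monotoneOn (left_mem_Icc.2 hab) ht ht.1,
             hf0mono.monotoneOn ht (right_mem_Icc.2 hab) ht.2⟩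
    · exact intermediate_value_Icc hab hf0cont
  have hg0img : g0 '' Icc a' b' = Icc (g0 a') (g0 b') := by
    apply Subset.antisymm
    · rintro _ ⟨t, ht, rfl⟩
      exact ⟨hg0mono.monotoneOn (left_mem_Icc.2 hab') ht ht.1,
             hg0mono.monotoneOn ht (right_mem_Icc.2 hab') ht.2⟩
    · exact intermediate_value_Icc hab' hg0cont
  have hproj : f0 '' Icc a b = g0 '' Icc a' b' := by
    have := congrArg (Set.image (fun v : Fin d → ℝ => v 0)) him
    simpa [Set.image_image] using this
  have hIcc : Icc (f0 a) (f0 b) = Icc (g0 a') (g0 b') := by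
    rw [← hf0img, ← hg0img, hproj]
  have hfa : f0 a = g0 a' := by
    have h1 : g0 a' ∈ Icc (f0 a) (f0 b) := by
      rw [hIcc]; exact left_mem_Icc.2 (hg0mono.monotoneOn (left_mem_Icc.2 hab')
        (right_mem_Icc.2 hab') hab')
    have h2 : f0 a ∈ Icc (g0 a') (g0 b') := by
      rw [← hIcc]; exact left_mem_Icc.2 (hf0mono.monotoneOn (left_mem_Icc.2 hab)
        (right_mem_Icc.2 hab) hab)
    exact le_antisymm h1.1 h2.1
  have hfb : f0 b = g0 b' := by
    have h1 : g0 b' ∈ Icc (f0 a) (f0 b) := by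
      rw [hIcc]; exact right_mem_Icc.2 (hg0mono.monotoneOn (left_mem_Icc.2 hab')
        (right_mem_Icc.2 hab') hab')
    have h2 : f0 b ∈ Icc (g0 a') (g0 b') := by
      rw [← hIcc]; exact right_mem_Icc.2 (hf0mono.monotoneOn (left_mem_Icc.2 hab)
        (right_mem_Icc.2 hab) hab)
    exact le_antisymm h2.2 h1.2
  rcases eq_or_lt_of_le hab' with heq' | hlt'
  · -- a' = b'
    subst heq'
    have : f0 a = f0 b := by rw [hfa, hfb]
    have hab2 : a = b := hf0mono.injOn (left_mem_Icc.2 hab) (right_mem_Icc.2 hab) this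
    rw [hab2]; ring
  have hltab : a < b := by
    rcases eq_or_lt_of_le hab with heq | h
    · exfalso
      have : g0 a' = g0 b' := by rw [← hfa, ← hfb, heq]
      have := hg0mono.injOn (left_mem_Icc.2 hab') (right_mem_Icc.2 hab') this
      linarith
    · exact h
  -- the reparametrization
  set finv : ℝ → ℝ := Function.invFunOn f0 (Icc a b) with hfinvdef
  set φ : ℝ → ℝ := fun s => finv (g s 0) with hφdef
  have hleft : ∀ t ∈ Icc a b, finv (f0 t) = t := fun t ht =>
    hf0mono.injOn.leftInvOn_invFunOn ht
  have hφspec : ∀ s ∈ Icc a' b', φ s ∈ Icc a b ∧ f (φ s) = g s := by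
    intro s hs
    have hmem : g s ∈ f '' Icc a b := by
      rw [him]; exact mem_image_of_mem g hs
    obtain ⟨t, ht, hts⟩ := hmem
    have h0 : f0 t = g s 0 := congrFun hts 0
    have hφs : φ s = t := by rw [hφdef]; simp only; rw [← h0]; exact hleft t ht
    rw [hφs]; exact ⟨ht, hts⟩
  have hcomp : ∀ s ∈ Icc a' b', f0 (φ s) = g0 s := fun s hs =>
    congrFun (hφspec s hs).2 0
  have hφa : φ a' = a := by
    have : φ a' = finv (f0 a) := by rw [hφdef]; simp only; rw [hfa]
    rw [this]; exact hleft a (left_mem_Icc.2 hab)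
  have hφb : φ b' = b := by
    have : φ b' = finv (f0 b) := by rw [hφdef]; simp only; rw [hfb]
    rw [this]; exact hleft b (right_mem_Icc.2 hab)
  have hφmono : StrictMonoOn φ (Icc a' b') := by
    intro s hs u hu hsu
    have h1 : g0 s < g0 u := hg0mono hs hu hsu
    rw [← hcomp s hs, ← hcomp u hu] at h1
    exact (hf0mono.lt_iff_lt (hφspec s hs).1 (hφspec u hu).1).1 h1
  have hφsurj : ∀ t ∈ Icc a b, ∃ s ∈ Icc a' b', φ s = t := by
    intro t ht
    have : f0 t ∈ g0 '' Icc a' b' := by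
      rw [← hproj]; exact mem_image_of_mem f0 ht
    obtain ⟨s, hs, hgs⟩ := this
    refine ⟨s, hs, ?_⟩
    rw [hφdef]; simp only
    rw [show g s 0 = f0 t from hgs]
    exact hleft t ht
  have hφimg : φ '' Icc a' b' = Icc a b := by
    apply Subset.antisymm
    · rintro _ ⟨s, hs, rfl⟩; exact (hφspec s hs).1
    · intro t ht
      obtain ⟨s, hs, hst⟩ := hφsurj t ht
      exact ⟨s, hs, hst⟩
  have hφint : ∀ s ∈ Ioo a' b', φ s ∈ Ioo a b := by
    intro s hs
    have hsI : s ∈ Icc a' b' := Ioo_subset_Icc_self hs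
    constructor
    · have : g0 a' < g0 s := hg0mono (left_mem_Icc.2 hab') hsI hs.1
      rw [← hfa, ← hcomp s hsI] at this
      exact (hf0mono.lt_iff_lt (left_mem_Icc.2 hab) (hφspec s hsI).1).1 this
    · have : g0 s < g0 b' := hg0mono hsI (right_mem_Icc.2 hab') hs.2
      rw [← hfb, ← hcomp s hsI] at this
      exact (hf0mono.lt_iff_lt (hφspec s hsI).1 (right_mem_Icc.2 hab)).1 this
  have hfinvmono : StrictMonoOn finv (Icc (f0 a) (f0 b)) := by
    intro y hy z hz hyz
    obtain ⟨ty, hty, rfl⟩ : y ∈ f0 '' Icc a b := hf0img ▸ hy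
    obtain ⟨tz, htz, rfl⟩ : z ∈ f0 '' Icc a b := hf0img ▸ hz
    rw [hleft ty hty, hleft tz htz]
    exact (hf0mono.lt_iff_lt hty htz).1 hyz
  have hfinvimg : finv '' Icc (f0 a) (f0 b) = Icc a b := by
    rw [← hf0img]
    exact hf0mono.injOn.invFunOn_image subset_rfl
  -- derivative of φ is 1 at interior points
  have hder1 : ∀ s ∈ Ioo a' b', HasDerivAt φ 1 s := by
    intro s hs
    have hsI : s ∈ Icc a' b' := Ioo_subset_Icc_self hs
    set t := φ s with htdef
    have htIoo : t ∈ Ioo a b := hφint s hs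
    have htI : t ∈ Icc a b := Ioo_subset_Icc_self htIoo
    have hτ : g0 s = f0 t := (hcomp s hsI).symm
    have hτmem : g0 s ∈ Ioo (f0 a) (f0 b) := by
      rw [hτ]
      exact ⟨(hf0mono.lt_iff_lt (left_mem_Icc.2 hab) htI).2 htIoo.1,
             (hf0mono.lt_iff_lt htI (right_mem_Icc.2 hab)).2 htIoo.2⟩
    have hfinvτ : finv (g0 s) = t := by rw [hτ]; exact hleft t htI
    -- local right inverse
    have hright : ∀ᶠ y in nhds (g0 s), f0 (finv y) = y := by
      filter_upwards [Ioo_mem_nhds hτmem.1 hτmem.2] with y hy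
      have : y ∈ f0 '' Icc a b := hf0img ▸ (Ioo_subset_Icc_self hy)
      obtain ⟨u, hu, rfl⟩ := this
      rw [hleft u hu]
    -- continuity of finv at g0 s
    have hcontinv : ContinuousAt finv (g0 s) := by
      apply hfinvmono.continuousAt_of_image_mem_nhds
      · exact Icc_mem_nhds hτmem.1 hτmem.2
      · rw [hfinvimg, hfinvτ]
        exact Icc_mem_nhds htIoo.1 htIoo.2
    have hne : f' t 0 ≠ 0 := by linarith [hfpos t htI]
    have hderf0 : HasDerivAt f0 (f' t 0) (finv (g0 s)) := by
      rw [hfinvτ]; exact hf0 t htI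
    have hderinv : HasDerivAt finv ((f' t 0)⁻¹) (g0 s) :=
      HasDerivAt.of_local_left_inverse hcontinv hderf0 hne hright
    have hderφ : HasDerivAt φ ((f' t 0)⁻¹ * g' s 0) s :=
      HasDerivAt.comp s hderinv (hg0 s hsI)
    -- chain rule: g' s = φ'(s) • f' t
    set c : ℝ := (f' t 0)⁻¹ * g' s 0 with hcdef
    have hchain : HasDerivAt (fun u => f (φ u)) (c • f' t) s := by
      have := (hf t htI).scomp s hderφ
      exact this
    have heqev : (fun u => f (φ u)) =ᶠ[nhds s] g := by
      filter_upwards [Ioo_mem_nhds hs.1 hs.2] with u hu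
      exact (hφspec u (Ioo_subset_Icc_self hu)).2
    have hderg2 : HasDerivAt g (c • f' t) s := hchain.congr_of_eventuallyEq heqev.symm
    have huniq : g' s = c • f' t := (hg s hsI).unique hderg2
    have hcomp_i : ∀ i, g' s i = c * f' t i := by
      intro i; rw [huniq]; rfl
    have hcpos : 0 < c := by
      rw [hcdef]
      have h1 := hfpos t htI
      have h2 := hgpos s hsI
      positivity
    have hsum : ∑ i ∈ Finset.univ.erase (0 : Fin d), (g' s i) ^ 2
        = c ^ 2 * ∑ i ∈ Finset.univ.erase (0 : Fin d), (f' t i) ^ 2 := by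
      rw [Finset.mul_sum]
      apply Finset.sum_congr rfl
      intro i _
      rw [hcomp_i i]; ring
    have hc2 : c ^ 2 = 1 := by
      have e1 := hwpg s hsI
      have e2 := hwpf t htI
      rw [hcomp_i 0, hsum] at e1
      nlinarith
    have hc1 : c = 1 := by nlinarith
    rw [← hc1]
    exact hderφ
  -- continuity of φ on Icc a' b'
  have hcontA : ContinuousWithinAt φ (Icc a' b') a' := by
    have h1 : ContinuousWithinAt φ (Ici a') a' := by
      apply hφmono.continuousWithinAt_right_of_image_mem_nhdsWithin
      · exact Icc_mem_nhdsGE_of_mem ⟨le_refl a', hlt'⟩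
      · rw [hφimg, hφa]
        exact Icc_mem_nhdsGE_of_mem ⟨le_refl a, hltab⟩
    exact h1.mono Icc_subset_Ici_self
  have hcontB : ContinuousWithinAt φ (Icc a' b') b' := by
    have h1 : ContinuousWithinAt φ (Iic b') b' := by
      apply hφmono.continuousWithinAt_left_of_image_mem_nhdsWithin
      · exact Icc_mem_nhdsLE_of_mem ⟨hlt', le_refl b'⟩
      · rw [hφimg, hφb]
        exact Icc_mem_nhdsLE_of_mem ⟨hltab, le_refl b⟩
    exact h1.mono Icc_subset_Iic_self
  have hφcont : ContinuousOn φ (Icc a' b') := by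
    intro x hx
    rcases eq_or_lt_of_le hx.1 with hxa | hxa
    · exact hxa ▸ hcontA
    rcases eq_or_lt_of_le hx.2 with hxb | hxb
    · exact hxb.symm ▸ hcontB
    · exact (hder1 x ⟨hxa, hxb⟩).continuousAt.continuousWithinAt
  -- mean value theorem
  obtain ⟨c, hc, hceq⟩ := exists_hasDerivAt_eq_slope φ (fun _ => (1:ℝ)) hlt' hφcont
    (fun x hx => hder1 x hx)
  rw [hφa, hφb] at hceq
  have hne : b' - a' ≠ 0 := by linarith
  field_simp at hceq
  linarith

/-- Two well-parametrized timelike curves tracing the same arc take equal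
parameter time. -/
theorem wellParam_same_arc_same_time (d : ℕ) [NeZero d] (hd : 2 ≤ d)
    (a b a' b' : ℝ) (hab : a ≤ b) (hab' : a' ≤ b')
    (f f' : ℝ → Fin d → ℝ) (g g' : ℝ → Fin d → ℝ)
    (hf : ∀ t ∈ Set.Icc a b, HasDerivAt f (f' t) t)
    (hg : ∀ t ∈ Set.Icc a' b', HasDerivAt g (g' t) t)
    (hwpf : ∀ t ∈ Set.Icc a b,
      (f' t 0) ^ 2 - ∑ i ∈ Finset.univ.erase (0 : Fin d), (f' t i) ^ 2 = 1)
    (hwpg : ∀ t ∈ Set.Icc a' b',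
      (g' t 0) ^ 2 - ∑ i ∈ Finset.univ.erase (0 : Fin d), (g' t i) ^ 2 = 1)
    (him : f '' Set.Icc a b = g '' Set.Icc a' b') :
    b - a = b' - a' := by
  obtain ⟨F, F', hF, hwpF, hFpos, hFim⟩ := normalizeCurve d a b hab f f' hf hwpf
  obtain ⟨G, G', hG, hwpG, hGpos, hGim⟩ := normalizeCurve d a' b' hab' g g' hg hwpg
  exact key_lemma d a b a' b' hab hab' F F' G G' hF hG hwpF hwpG hFpos hGpos
    (by rw [hFim, hGim, him])
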